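/- The number of partitions of a 2k-element set into k unordered pairs is (2k-1)!! , and of these, ((2k-1)!!+1)/2 have even crossing number and ((2k-1)!!-1)/2 have odd crossing number with respect to any fixed cyclic order of the 2k elements; hence the signed sum Σ_ξ (-1)^{N(ξ)} over all pair partitions ξ equals 1. -/

import Mathlib

open Finset
open scoped Classical

/-- The element `2*i` of `Fin (2*k)`. -/
def dbl {k : ℕ} (i : Fin k) : Fin (2 * k) := ⟨2 * i.1, by have := i.isLt; omega⟩

/-- The element `2*i+1` of `Fin (2*k)`. -/
def dbl' {k : ℕ} (i : Fin k) : Fin (2 * k) := ⟨2 * i.1 + 1, by have := i.isLt; omega⟩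

/-- Pair partitions of the `2k`-element set `Fin (2*k)`, encoded by permutations in
canonical form: the pairs are `{σ(2i), σ(2i+1)}` with `σ(2i) < σ(2i+1)` and
`σ(0) < σ(2) < ⋯`. This set is in bijection with the pair partitions. -/
noncomputable def pairPartitions (k : ℕ) : Finset (Equiv.Perm (Fin (2 * k))) :=
  Finset.univ.filter (fun σ =>
    (∀ i : Fin k, σ (dbl i) < σ (dbl' i)) ∧
    ∀ i j : Fin k, i < j → σ (dbl i) < σ (dbl j))

/-- The crossing number `N(ξ)` of a pair partition with respect to the fixed cyclic
order of `Fin (2*k)` on the circle. -/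
noncomputable def crossNum {k : ℕ} (σ : Equiv.Perm (Fin (2 * k))) : ℕ :=
  Nat.card {p : Fin k × Fin k // p.1 < p.2 ∧
    Xor' (σ (dbl p.1) < σ (dbl p.2) ∧ σ (dbl p.2) < σ (dbl' p.1))
         (σ (dbl p.1) < σ (dbl' p.2) ∧ σ (dbl' p.2) < σ (dbl' p.1))}

namespace PPaux

variable {k : ℕ}

lemma mem_pairPartitions {n : ℕ} {σ : Equiv.Perm (Fin (2 * n))} :
    σ ∈ pairPartitions n ↔
      (∀ i : Fin n, σ (dbl i) < σ (dbl' i)) ∧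
      ∀ i j : Fin n, i < j → σ (dbl i) < σ (dbl j) := by
  simp [pairPartitions]

lemma crossNum_eq_sum {n : ℕ} (σ : Equiv.Perm (Fin (2 * n))) :
    crossNum σ = ∑ p : Fin n × Fin n, if (p.1 < p.2 ∧
      Xor' (σ (dbl p.1) < σ (dbl p.2) ∧ σ (dbl p.2) < σ (dbl' p.1))
           (σ (dbl p.1) < σ (dbl' p.2) ∧ σ (dbl' p.2) < σ (dbl' p.1))) then 1 else 0 := by
  rw [crossNum, Nat.card_eq_fintype_card, Fintype.card_subtype, Finset.card_filter]

/-- order-preserving embedding of `Fin (2k)` into `Fin (2k+2)` avoiding `0` and `m+1`. -/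
def emb (m : ℕ) (x : Fin (2 * k)) : Fin (2 * (k + 1)) :=
  if x.1 < m then ⟨x.1 + 1, by have := x.isLt; omega⟩ else ⟨x.1 + 2, by have := x.isLt; omega⟩

lemma emb_val (m : ℕ) (x : Fin (2 * k)) :
    (emb m x).1 = if x.1 < m then x.1 + 1 else x.1 + 2 := by
  unfold emb; split <;> rfl

lemma emb_pos (m : ℕ) (x : Fin (2 * k)) : 0 < (emb m x).1 := by
  rw [emb_val]; split <;> omega

lemma emb_ne (m : ℕ) (x : Fin (2 * k)) : (emb m x).1 ≠ m + 1 := by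
  rw [emb_val]; split <;> omega

lemma emb_lt_iff (m : ℕ) (x y : Fin (2 * k)) : (emb m x).1 < (emb m y).1 ↔ x.1 < y.1 := by
  rw [emb_val, emb_val]; split <;> split <;> omega

lemma emb_lt_succ_iff (m : ℕ) (x : Fin (2 * k)) : (emb m x).1 < m + 1 ↔ x.1 < m := by
  rw [emb_val]; split <;> omega

lemma emb_inj (m : ℕ) : Function.Injective (emb (k := k) m) := by
  intro x y h
  have h' : (emb m x).1 = (emb m y).1 := by rw [h]
  rw [emb_val, emb_val] at h'
  apply Fin.ext
  split at h' <;> split at h' <;> omega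

def insFun (m : Fin (2 * k + 1)) (τ : Equiv.Perm (Fin (2 * k))) :
    Fin (2 * (k + 1)) → Fin (2 * (k + 1)) := fun j =>
  if h0 : j.1 = 0 then ⟨0, by omega⟩
  else if h1 : j.1 = 1 then ⟨m.1 + 1, by have := m.isLt; omega⟩
  else emb m.1 (τ ⟨j.1 - 2, by have := j.isLt; omega⟩)

lemma insFun_zero (m : Fin (2 * k + 1)) (τ : Equiv.Perm (Fin (2 * k)))
    {j : Fin (2 * (k + 1))} (hj : j.1 = 0) : (insFun m τ j).1 = 0 := by
  unfold insFun; rw [dif_pos hj]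

lemma insFun_one (m : Fin (2 * k + 1)) (τ : Equiv.Perm (Fin (2 * k)))
    {j : Fin (2 * (k + 1))} (hj : j.1 = 1) : (insFun m τ j).1 = m.1 + 1 := by
  unfold insFun; rw [dif_neg (by omega), dif_pos hj]

lemma insFun_ge2 (m : Fin (2 * k + 1)) (τ : Equiv.Perm (Fin (2 * k)))
    {j : Fin (2 * (k + 1))} (hj : 2 ≤ j.1) :
    insFun m τ j = emb m.1 (τ ⟨j.1 - 2, by have := j.isLt; omega⟩) := by
  unfold insFun; rw [dif_neg (by omega), dif_neg (by omega)]

lemma insFun_inj (m : Fin (2 * k + 1)) (τ : Equiv.Perm (Fin (2 * k))) :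
    Function.Injective (insFun m τ) := by
  intro a b h
  rcases Nat.lt_or_ge a.1 2 with ha | ha <;> rcases Nat.lt_or_ge b.1 2 with hb | hb
  · -- both small
    interval_cases h' : a.1 <;> interval_cases h'' : b.1 <;> apply Fin.ext <;> try omega
    · have := congrArg Fin.val h
      rw [insFun_zero m τ (by omega), insFun_one m τ (by omega)] at this; omega
    · have := congrArg Fin.val h
      rw [insFun_one m τ (by omega), insFun_zero m τ (by omega)] at this; omega
  · exfalso
    have := congrArg Fin.val h
    rw [insFun_ge2 m τ hb] at this
    rcases Nat.lt_or_ge a.1 1 with h1 | h1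
    · rw [insFun_zero m τ (by omega)] at this
      have := emb_pos (k := k) m.1 (τ ⟨b.1 - 2, by have := b.isLt; omega⟩); omega
    · rw [insFun_one m τ (by omega)] at this
      have := emb_ne (k := k) m.1 (τ ⟨b.1 - 2, by have := b.isLt; omega⟩); omega
  · exfalso
    have := congrArg Fin.val h
    rw [insFun_ge2 m τ ha] at this
    rcases Nat.lt_or_ge b.1 1 with h1 | h1
    · rw [insFun_zero m τ (by omega)] at this
      have := emb_pos (k := k) m.1 (τ ⟨a.1 - 2, by have := a.isLt; omega⟩); omega
    · rw [insFun_one m τ (by omega)] at this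
      have := emb_ne (k := k) m.1 (τ ⟨a.1 - 2, by have := a.isLt; omega⟩); omega
  · rw [insFun_ge2 m τ ha, insFun_ge2 m τ hb] at h
    have h2 := τ.injective (emb_inj m.1 h)
    have h3 := congrArg Fin.val h2
    simp only at h3
    exact Fin.ext (by omega)

noncomputable def ins (m : Fin (2 * k + 1)) (τ : Equiv.Perm (Fin (2 * k))) :
    Equiv.Perm (Fin (2 * (k + 1))) :=
  Equiv.ofBijective _ ((Finite.injective_iff_bijective).1 (insFun_inj m τ))

lemma ins_apply (m : Fin (2 * k + 1)) (τ : Equiv.Perm (Fin (2 * k))) (j : Fin (2 * (k + 1))) :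
    ins m τ j = insFun m τ j := rfl

lemma dbl_zero_val : (dbl (0 : Fin (k + 1))).1 = 0 := by simp [dbl]
lemma dbl'_zero_val : (dbl' (0 : Fin (k + 1))).1 = 1 := by simp [dbl']; exact Nat.mod_eq_of_lt (by omega)

lemma ins_dbl_zero (m : Fin (2 * k + 1)) (τ : Equiv.Perm (Fin (2 * k))) :
    (ins m τ (dbl (0 : Fin (k + 1)))).1 = 0 := by
  rw [ins_apply]; exact insFun_zero m τ dbl_zero_val

lemma ins_dbl'_zero (m : Fin (2 * k + 1)) (τ : Equiv.Perm (Fin (2 * k))) :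
    (ins m τ (dbl' (0 : Fin (k + 1)))).1 = m.1 + 1 := by
  rw [ins_apply]; exact insFun_one m τ dbl'_zero_val

lemma ins_dbl_succ (m : Fin (2 * k + 1)) (τ : Equiv.Perm (Fin (2 * k))) (q : Fin k) :
    ins m τ (dbl (Fin.succ q)) = emb m.1 (τ (dbl q)) := by
  have h2 : 2 ≤ (dbl (Fin.succ q)).1 := by
    show 2 ≤ 2 * (Fin.succ q).1; rw [Fin.val_succ]; omega
  rw [ins_apply, insFun_ge2 m τ h2]
  congr 2

lemma ins_dbl'_succ (m : Fin (2 * k + 1)) (τ : Equiv.Perm (Fin (2 * k))) (q : Fin k) :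
    ins m τ (dbl' (Fin.succ q)) = emb m.1 (τ (dbl' q)) := by
  have h2 : 2 ≤ (dbl' (Fin.succ q)).1 := by
    show 2 ≤ 2 * (Fin.succ q).1 + 1; rw [Fin.val_succ]; omega
  rw [ins_apply, insFun_ge2 m τ h2]
  congr 2

lemma ins_mem (m : Fin (2 * k + 1)) {τ : Equiv.Perm (Fin (2 * k))}
    (hτ : τ ∈ pairPartitions k) : ins m τ ∈ pairPartitions (k + 1) := by
  obtain ⟨h1, h2⟩ := mem_pairPartitions.mp hτ
  rw [mem_pairPartitions]
  constructor
  · intro i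
    induction i using Fin.cases with
    | zero =>
        rw [Fin.lt_def, ins_dbl_zero, ins_dbl'_zero]; omega
    | succ q =>
        rw [Fin.lt_def, ins_dbl_succ, ins_dbl'_succ, emb_lt_iff]
        exact Fin.lt_def.mp (h1 q)
  · intro i j hij
    induction j using Fin.cases with
    | zero => exact absurd hij (Fin.not_lt_zero i)
    | succ q =>
        induction i using Fin.cases with
        | zero =>
            rw [Fin.lt_def, ins_dbl_zero, ins_dbl_succ]
            exact emb_pos _ _
        | succ p =>
            rw [Fin.lt_def, ins_dbl_succ, ins_dbl_succ, emb_lt_iff]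
            exact Fin.lt_def.mp (h2 p q (by exact Fin.succ_lt_succ_iff.mp hij))

noncomputable def crossA (m : Fin (2 * k + 1)) (τ : Equiv.Perm (Fin (2 * k))) : ℕ :=
  ∑ q : Fin k, if Xor' ((τ (dbl q)).1 < m.1) ((τ (dbl' q)).1 < m.1) then 1 else 0

lemma cond0_iff (m : Fin (2 * k + 1)) (τ : Equiv.Perm (Fin (2 * k))) (q : Fin k) :
    (((0 : Fin (k + 1)) < Fin.succ q) ∧
      Xor' (ins m τ (dbl 0) < ins m τ (dbl (Fin.succ q)) ∧
              ins m τ (dbl (Fin.succ q)) < ins m τ (dbl' 0))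
           (ins m τ (dbl 0) < ins m τ (dbl' (Fin.succ q)) ∧
              ins m τ (dbl' (Fin.succ q)) < ins m τ (dbl' 0)))
      ↔ Xor' ((τ (dbl q)).1 < m.1) ((τ (dbl' q)).1 < m.1) := by
  simp only [Fin.lt_def, ins_dbl_zero, ins_dbl'_zero, ins_dbl_succ, ins_dbl'_succ,
    emb_lt_succ_iff]
  have h0 : ∀ x, (0 : Fin (2 * (k + 1))) < emb m.1 x := fun x => Fin.val_pos_iff.mp (emb_pos _ x)
  simp [emb_pos, h0, Fin.val_succ]

lemma condsucc_iff (m : Fin (2 * k + 1)) (τ : Equiv.Perm (Fin (2 * k))) (p q : Fin k) :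
    ((Fin.succ p < Fin.succ q) ∧
      Xor' (ins m τ (dbl (Fin.succ p)) < ins m τ (dbl (Fin.succ q)) ∧
              ins m τ (dbl (Fin.succ q)) < ins m τ (dbl' (Fin.succ p)))
           (ins m τ (dbl (Fin.succ p)) < ins m τ (dbl' (Fin.succ q)) ∧
              ins m τ (dbl' (Fin.succ q)) < ins m τ (dbl' (Fin.succ p))))
      ↔ (p < q ∧
      Xor' (τ (dbl p) < τ (dbl q) ∧ τ (dbl q) < τ (dbl' p))
           (τ (dbl p) < τ (dbl' q) ∧ τ (dbl' q) < τ (dbl' p))) := by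
  simp only [Fin.lt_def, ins_dbl_succ, ins_dbl'_succ, emb_lt_iff, Fin.val_succ,
    Nat.add_lt_add_iff_right]

lemma crossNum_ins (m : Fin (2 * k + 1)) (τ : Equiv.Perm (Fin (2 * k))) :
    crossNum (ins m τ) = crossA m τ + crossNum τ := by
  rw [crossNum_eq_sum (ins m τ), crossNum_eq_sum τ, Fintype.sum_prod_type,
    Fintype.sum_prod_type, Fin.sum_univ_succ]
  congr 1
  · rw [Fin.sum_univ_succ, if_neg (by simp), Nat.zero_add]
    exact Finset.sum_congr rfl (fun q _ => if_congr (cond0_iff m τ q) rfl rfl)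
  · apply Finset.sum_congr rfl
    intro p _
    rw [Fin.sum_univ_succ, if_neg (by simp), Nat.zero_add]
    exact Finset.sum_congr rfl (fun q _ => if_congr (condsucc_iff m τ p q) rfl rfl)

def pairE : Fin k × Fin 2 → Fin (2 * k) := fun p =>
  ⟨2 * p.1.1 + p.2.1, by have := p.1.isLt; have := p.2.isLt; omega⟩

lemma pairE_bij : Function.Bijective (pairE (k := k)) := by
  rw [Fintype.bijective_iff_injective_and_card]
  constructor
  · rintro ⟨a, b⟩ ⟨c, d⟩ h
    have h' := congrArg Fin.val h
    simp only [pairE] at h'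
    have hb := b.isLt; have hd := d.isLt
    have hh : a.1 = c.1 ∧ b.1 = d.1 := by omega
    exact Prod.ext (Fin.ext hh.1) (Fin.ext hh.2)
  · simp [Fintype.card_prod]; ring

lemma sum_split (f : Fin (2 * k) → ℕ) :
    ∑ x, f x = ∑ q : Fin k, (f (dbl q) + f (dbl' q)) := by
  rw [← Equiv.sum_comp (Equiv.ofBijective _ pairE_bij) f, Fintype.sum_prod_type]
  apply Finset.sum_congr rfl
  intro q _
  rw [Fin.sum_univ_two]
  show f (pairE (q, 0)) + f (pairE (q, 1)) = f (dbl q) + f (dbl' q)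
  congr 2 <;> apply Fin.ext <;> simp [pairE, dbl, dbl']

lemma count_lt (n a : ℕ) (h : a ≤ n) :
    (∑ y : Fin n, if y.1 < a then 1 else 0) = a := by
  rw [Fin.sum_univ_eq_sum_range (fun i => if i < a then 1 else 0) n, ← Finset.card_filter]
  rw [show Finset.filter (fun i => i < a) (Finset.range n) = Finset.range a from by
    ext i; simp; omega]
  exact Finset.card_range a

lemma crossA_mod_two (m : Fin (2 * k + 1)) (τ : Equiv.Perm (Fin (2 * k))) :
    crossA m τ % 2 = m.1 % 2 := by
  have key : (∑ q : Fin k, ((if (τ (dbl q)).1 < m.1 then 1 else 0)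
      + (if (τ (dbl' q)).1 < m.1 then 1 else 0))) = m.1 := by
    rw [← sum_split (fun x => if (τ x).1 < m.1 then 1 else 0),
      Equiv.sum_comp τ (fun y => if y.1 < m.1 then (1 : ℕ) else 0)]
    exact count_lt (2 * k) m.1 (by have := m.isLt; omega)
  have step : crossA m τ % 2 = (∑ q : Fin k, ((if (τ (dbl q)).1 < m.1 then 1 else 0)
      + (if (τ (dbl' q)).1 < m.1 then 1 else 0))) % 2 := by
    rw [crossA, Finset.sum_nat_mod, Finset.sum_nat_mod (n := 2)
      (f := fun q : Fin k => ((if (τ (dbl q)).1 < m.1 then 1 else 0)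
        + (if (τ (dbl' q)).1 < m.1 then 1 else 0)))]
    congr 1
    apply Finset.sum_congr rfl
    intro q _
    by_cases hP : (τ (dbl q)).1 < m.1 <;> by_cases hQ : (τ (dbl' q)).1 < m.1 <;>
      simp [Xor', hP, hQ]
  rw [step, key]

set_option maxHeartbeats 2000000 in
lemma exists_ins {σ : Equiv.Perm (Fin (2 * (k + 1)))} (hσ : σ ∈ pairPartitions (k + 1)) :
    ∃ (m : Fin (2 * k + 1)) (τ : Equiv.Perm (Fin (2 * k))),
      τ ∈ pairPartitions k ∧ ins m τ = σ := by
  obtain ⟨h1, h2⟩ := mem_pairPartitions.mp hσ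
  set z : Fin (2 * (k + 1)) := ⟨0, by omega⟩ with hz
  set o : Fin (2 * (k + 1)) := ⟨1, by omega⟩ with ho
  have hz0 : z.1 = 0 := rfl
  have ho1 : o.1 = 1 := rfl
  have hdz : dbl (0 : Fin (k + 1)) = z := Fin.ext (by rw [hz0]; exact dbl_zero_val)
  have hdz' : dbl' (0 : Fin (k + 1)) = o := Fin.ext (by rw [ho1]; exact dbl'_zero_val)
  have hmin : ∀ j, (σ z).1 ≤ (σ j).1 := by
    intro j
    have hjlt := j.isLt
    set i : Fin (k + 1) := ⟨j.1 / 2, by omega⟩ with hi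
    have hiv : i.1 = j.1 / 2 := rfl
    rcases Nat.lt_or_ge 0 i.1 with hpos | hzero
    · have h0i : (0 : Fin (k + 1)) < i := by
        rw [Fin.lt_def, Fin.val_zero]; exact hpos
      have hA : (σ z).1 < (σ (dbl i)).1 := by
        have := h2 0 i h0i; rw [hdz] at this; exact Fin.lt_def.mp this
      rcases Nat.even_or_odd j.1 with he | hodd
      · have hje : j = dbl i := by
          apply Fin.ext
          show j.1 = 2 * i.1
          obtain ⟨t, ht⟩ := he
          rw [hiv]; omega
        rw [hje]; omega
      · have hjo : j = dbl' i := by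
          apply Fin.ext
          show j.1 = 2 * i.1 + 1
          obtain ⟨t, ht⟩ := hodd
          rw [hiv]; omega
        have hB := Fin.lt_def.mp (h1 i)
        rw [hjo]; omega
    · have hj01 : j.1 = 0 ∨ j.1 = 1 := by rw [hiv] at hzero; omega
      rcases hj01 with h | h
      · have : j = z := Fin.ext (by rw [hz0]; exact h)
        rw [this]
      · have hjo : j = o := Fin.ext (by rw [ho1]; exact h)
        have := Fin.lt_def.mp (h1 0); rw [hdz, hdz'] at this
        rw [hjo]; omega
  have hσz : (σ z).1 = 0 := by
    have := hmin (σ.symm z)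
    rw [Equiv.apply_symm_apply, hz0] at this
    omega
  have hs1 : 1 ≤ (σ o).1 := by
    rcases Nat.eq_zero_or_pos (σ o).1 with h | h
    · exfalso
      have he : σ o = σ z := Fin.ext (by rw [hσz, h])
      have := σ.injective he
      rw [Fin.ext_iff, ho1, hz0] at this
      omega
    · exact h
  have hs2 : (σ o).1 ≤ 2 * k + 1 := by have := (σ o).isLt; omega
  have key : ∀ x : Fin (2 * k), x.1 + 2 < 2 * (k + 1) := fun x => by have := x.isLt; omega
  set a : Fin (2 * k) → ℕ := fun x => (σ ⟨x.1 + 2, key x⟩).1 with ha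
  have ha_lt : ∀ x, a x < 2 * (k + 1) := fun x => (σ ⟨x.1 + 2, key x⟩).isLt
  have ha_ne0 : ∀ x, a x ≠ 0 := by
    intro x h
    have he : σ ⟨x.1 + 2, key x⟩ = σ z := Fin.ext (by rw [hσz]; exact h)
    have := σ.injective he
    rw [Fin.ext_iff, hz0] at this
    simp at this
  have ha_nes : ∀ x, a x ≠ (σ o).1 := by
    intro x h
    have he : σ ⟨x.1 + 2, key x⟩ = σ o := Fin.ext h
    have := σ.injective he
    rw [Fin.ext_iff, ho1] at this
    simp at this
  set g : Fin (2 * k) → Fin (2 * k) := fun x =>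
    ⟨if a x < (σ o).1 then a x - 1 else a x - 2, by
      have := ha_lt x; have := ha_ne0 x; have := x.isLt; split <;> omega⟩ with hg
  have hgval : ∀ x, (g x).1 = if a x < (σ o).1 then a x - 1 else a x - 2 := fun x => rfl
  have hglt : ∀ x y, a x < a y → (g x).1 < (g y).1 := by
    intro x y hxy
    have := ha_ne0 x; have := ha_ne0 y; have := ha_nes x; have := ha_nes y
    rw [hgval, hgval]
    split <;> split <;> omega
  have ginj : Function.Injective g := by
    intro x y hxy
    have h' : (g x).1 = (g y).1 := congrArg Fin.val hxy
    rw [hgval, hgval] at h'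
    have hax : a x = a y := by
      have := ha_ne0 x; have := ha_ne0 y; have := ha_nes x; have := ha_nes y
      split at h' <;> split at h' <;> omega
    have he : σ ⟨x.1 + 2, key x⟩ = σ ⟨y.1 + 2, key y⟩ := Fin.ext hax
    have := σ.injective he
    rw [Fin.ext_iff] at this
    exact Fin.ext (by simpa using this)
  set τ : Equiv.Perm (Fin (2 * k)) :=
    Equiv.ofBijective g (Finite.injective_iff_bijective.mp ginj) with hτdef
  have hτg : ∀ x, τ x = g x := fun _ => rfl
  have harg : ∀ i : Fin k,
      (⟨(dbl i).1 + 2, key (dbl i)⟩ : Fin (2 * (k + 1))) = dbl (Fin.succ i) := by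
    intro i
    apply Fin.ext
    show 2 * i.1 + 2 = 2 * (Fin.succ i).1
    rw [Fin.val_succ]; ring
  have harg' : ∀ i : Fin k,
      (⟨(dbl' i).1 + 2, key (dbl' i)⟩ : Fin (2 * (k + 1))) = dbl' (Fin.succ i) := by
    intro i
    apply Fin.ext
    show 2 * i.1 + 1 + 2 = 2 * (Fin.succ i).1 + 1
    rw [Fin.val_succ]; ring
  refine ⟨⟨(σ o).1 - 1, by omega⟩, τ, ?_, ?_⟩
  · rw [mem_pairPartitions]
    constructor
    · intro i
      rw [Fin.lt_def, hτg, hτg]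
      apply hglt
      show (σ ⟨(dbl i).1 + 2, key (dbl i)⟩).1 < (σ ⟨(dbl' i).1 + 2, key (dbl' i)⟩).1
      rw [harg, harg']
      exact Fin.lt_def.mp (h1 (Fin.succ i))
    · intro i j hij
      rw [Fin.lt_def, hτg, hτg]
      apply hglt
      show (σ ⟨(dbl i).1 + 2, key (dbl i)⟩).1 < (σ ⟨(dbl j).1 + 2, key (dbl j)⟩).1
      rw [harg, harg]
      exact Fin.lt_def.mp (h2 (Fin.succ i) (Fin.succ j) (Fin.succ_lt_succ_iff.mpr hij))
  · apply Equiv.ext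
    intro j
    rw [ins_apply]
    apply Fin.ext
    rcases Nat.lt_or_ge j.1 2 with hj | hj
    · rcases (by omega : j.1 = 0 ∨ j.1 = 1) with h | h
      · rw [insFun_zero _ _ h]
        have hjz : j = z := Fin.ext (by rw [hz0]; exact h)
        rw [hjz, hσz]
      · rw [insFun_one _ _ h]
        have hjo : j = o := Fin.ext (by rw [ho1]; exact h)
        rw [hjo]
        show (σ o).1 - 1 + 1 = (σ o).1
        omega
    · rw [insFun_ge2 _ _ hj, emb_val, hτg, hgval]
      have hax : a ⟨j.1 - 2, by have := j.isLt; omega⟩ = (σ j).1 := by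
        show (σ ⟨j.1 - 2 + 2, _⟩).1 = (σ j).1
        have : (⟨j.1 - 2 + 2, key ⟨j.1 - 2, by have := j.isLt; omega⟩⟩ : Fin (2 * (k + 1))) = j :=
          Fin.ext (by show j.1 - 2 + 2 = j.1; omega)
        rw [this]
      rw [hax]
      have hne0 : (σ j).1 ≠ 0 := by
        have := ha_ne0 ⟨j.1 - 2, by have := j.isLt; omega⟩
        rwa [hax] at this
      have hnes : (σ j).1 ≠ (σ o).1 := by
        have := ha_nes ⟨j.1 - 2, by have := j.isLt; omega⟩
        rwa [hax] at this
      show (if (if (σ j).1 < (σ o).1 then (σ j).1 - 1 else (σ j).1 - 2) < (σ o).1 - 1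
        then (if (σ j).1 < (σ o).1 then (σ j).1 - 1 else (σ j).1 - 2) + 1
        else (if (σ j).1 < (σ o).1 then (σ j).1 - 1 else (σ j).1 - 2) + 2) = (σ j).1
      split <;> split <;> omega

lemma sum_ins {M : Type*} [AddCommMonoid M] (k : ℕ)
    (w : Equiv.Perm (Fin (2 * (k + 1))) → M) :
    ∑ σ ∈ pairPartitions (k + 1), w σ
      = ∑ m : Fin (2 * k + 1), ∑ τ ∈ pairPartitions k, w (ins m τ) := by
  symm
  rw [← Finset.sum_product']
  refine Finset.sum_bij (fun p _ => ins p.1 p.2) ?_ ?_ ?_ ?_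
  · rintro ⟨m, τ⟩ hp
    exact ins_mem m (Finset.mem_product.mp hp).2
  · rintro ⟨m, τ⟩ h1 ⟨m', τ'⟩ h2 h
    have hm : m = m' := by
      have := congrArg (fun e : Equiv.Perm (Fin (2 * (k + 1))) => (e ⟨1, by omega⟩).1) h
      simp only [ins_apply] at this
      rw [insFun_one m τ rfl, insFun_one m' τ' rfl] at this
      exact Fin.ext (by omega)
    subst hm
    have hτ : τ = τ' := by
      apply Equiv.ext
      intro x
      have := congrArg (fun e : Equiv.Perm (Fin (2 * (k + 1))) =>
        e ⟨x.1 + 2, by have := x.isLt; omega⟩) h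
      simp only [ins_apply] at this
      rw [insFun_ge2 m τ (Nat.le_add_left 2 x.1), insFun_ge2 m τ' (Nat.le_add_left 2 x.1)] at this
      have h2 := emb_inj m.1 this
      exact h2
    simp [hτ]
  · intro σ hσ
    obtain ⟨m, τ, hτ, h⟩ := exists_ins hσ
    exact ⟨(m, τ), Finset.mem_product.mpr ⟨Finset.mem_univ _, hτ⟩, h⟩
  · intros; rfl

lemma df_step (n : ℕ) :
    Nat.doubleFactorial (2 * n + 1) = (2 * n + 1) * Nat.doubleFactorial (2 * n - 1) := by
  cases n with
  | zero => simp [Nat.doubleFactorial]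
  | succ p =>
    rw [show 2 * (p + 1) + 1 = (2 * p + 1) + 2 by ring, Nat.doubleFactorial_add_two,
      show 2 * (p + 1) - 1 = 2 * p + 1 by omega]

lemma main (k : ℕ) : (pairPartitions k).card = Nat.doubleFactorial (2 * k - 1) ∧
    (∑ σ ∈ pairPartitions k, (-1 : ℤ) ^ crossNum σ) = 1 := by
  induction k with
  | zero =>
    have hcn : ∀ σ : Equiv.Perm (Fin (2 * 0)), crossNum σ = 0 := by
      intro σ
      rw [crossNum]
      exact Nat.card_of_isEmpty
    have hpp : pairPartitions 0 = Finset.univ := by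
      rw [pairPartitions, Finset.filter_true_of_mem]
      intro σ _
      exact ⟨fun i => i.elim0, fun i => i.elim0⟩
    have hcard : (pairPartitions 0).card = 1 := by
      rw [hpp]
      simp
    constructor
    · simpa using hcard
    · rw [Finset.sum_congr rfl (fun σ _ => by rw [hcn σ, pow_zero])]
      rw [Finset.sum_const, hcard]
      simp
  | succ n ih =>
    obtain ⟨ihc, ihs⟩ := ih
    have hdf : Nat.doubleFactorial (2 * (n + 1) - 1)
        = (2 * n + 1) * Nat.doubleFactorial (2 * n - 1) := by
      rw [show 2 * (n + 1) - 1 = 2 * n + 1 by omega, df_step]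
    constructor
    · rw [Finset.card_eq_sum_ones, sum_ins n (fun _ => 1)]
      simp only [Finset.sum_const, smul_eq_mul, mul_one, Finset.card_univ, Fintype.card_fin]
      rw [ihc, hdf]
    · rw [sum_ins n (fun σ => (-1 : ℤ) ^ crossNum σ)]
      have hterm : ∀ (m : Fin (2 * n + 1)) (τ : Equiv.Perm (Fin (2 * n))),
          (-1 : ℤ) ^ crossNum (ins m τ) = (-1) ^ m.1 * (-1) ^ crossNum τ := by
        intro m τ
        rw [crossNum_ins, pow_add]
        congr 1
        have h := crossA_mod_two m τ
        rcases Nat.even_or_odd (crossA m τ) with he | ho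
        · rw [he.neg_one_pow,
            (show Even m.1 by rw [Nat.even_iff] at he ⊢; omega).neg_one_pow]
        · rw [ho.neg_one_pow,
            (show Odd m.1 by rw [Nat.odd_iff] at ho ⊢; omega).neg_one_pow]
      calc ∑ m : Fin (2 * n + 1), ∑ τ ∈ pairPartitions n, (-1 : ℤ) ^ crossNum (ins m τ)
          = ∑ m : Fin (2 * n + 1), (-1 : ℤ) ^ m.1
              * ∑ τ ∈ pairPartitions n, (-1 : ℤ) ^ crossNum τ := by
            apply Finset.sum_congr rfl
            intro m _
            rw [Finset.mul_sum]
            exact Finset.sum_congr rfl (fun τ _ => hterm m τ)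
        _ = ∑ m : Fin (2 * n + 1), (-1 : ℤ) ^ m.1 := by
            rw [ihs]
            simp
        _ = 1 := by
            rw [Fin.sum_univ_eq_sum_range (fun i => (-1 : ℤ) ^ i) (2 * n + 1),
              neg_one_geom_sum, if_neg (by rw [Nat.even_iff]; omega)]

end PPaux

/-- The number of pair partitions of a `2k`-element set is `(2k-1)!!`; of these,
`((2k-1)!!+1)/2` have even crossing number and `((2k-1)!!-1)/2` have odd crossing
number; hence the signed sum `Σ_ξ (-1)^{N(ξ)}` equals `1`. -/
theorem pair_partition_count_and_signed_sum (k : ℕ) :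
    (pairPartitions k).card = Nat.doubleFactorial (2 * k - 1) ∧
    2 * ((pairPartitions k).filter (fun σ => Even (crossNum σ))).card
      = Nat.doubleFactorial (2 * k - 1) + 1 ∧
    2 * ((pairPartitions k).filter (fun σ => ¬ Even (crossNum σ))).card + 1
      = Nat.doubleFactorial (2 * k - 1) ∧
    (∑ σ ∈ pairPartitions k, (-1 : ℤ) ^ crossNum σ) = 1 := by
  obtain ⟨hc, hs⟩ := PPaux.main k
  have hsplit := Finset.sum_filter_add_sum_filter_not (pairPartitions k)
    (fun σ => Even (crossNum σ)) (fun σ => (-1 : ℤ) ^ crossNum σ)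
  have h1 : ∑ σ ∈ (pairPartitions k).filter (fun σ => Even (crossNum σ)),
      (-1 : ℤ) ^ crossNum σ
      = (((pairPartitions k).filter (fun σ => Even (crossNum σ))).card : ℤ) := by
    rw [Finset.sum_congr rfl (fun σ hσ => (Finset.mem_filter.mp hσ).2.neg_one_pow)]
    simp
  have h2 : ∑ σ ∈ (pairPartitions k).filter (fun σ => ¬ Even (crossNum σ)),
      (-1 : ℤ) ^ crossNum σ
      = -(((pairPartitions k).filter (fun σ => ¬ Even (crossNum σ))).card : ℤ) := by
    rw [Finset.sum_congr rfl (fun σ hσ =>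
      (Nat.not_even_iff_odd.mp (Finset.mem_filter.mp hσ).2).neg_one_pow)]
    simp
  have hcard := Finset.card_filter_add_card_filter_not
    (s := pairPartitions k) (p := fun σ => Even (crossNum σ))
  rw [h1, h2, hs] at hsplit
  have hEO : ((pairPartitions k).filter (fun σ => Even (crossNum σ))).card
      = ((pairPartitions k).filter (fun σ => ¬ Even (crossNum σ))).card + 1 := by
    omega
  refine ⟨hc, by omega, by omega, hs⟩
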